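/- arXiv:1001.2034 — 2 statements merged into one kernel-verified Lean document; each statement's English description precedes it below -/
import Mathlib

section
/- Let w_1, ..., w_t be distinct natural numbers, each strictly less than 2^M. Let p_1, ..., p_l be distinct primes whose product exceeds 2^{M·t^2}. Then there exists an index k such that the residues w_1 mod p_k, ..., w_t mod p_k are pairwise distinct. -/
/-- If `w 1, ..., w t` are distinct naturals below `2^M` and `p 1, ..., p l` are distinct
primes whose product exceeds `2^(M·t²)`, then some prime `p k` separates all the `w i`
modulo `p k`. -/
theorem exists_good_prime {t l M : ℕ} (hM : 0 < M) (ht : 0 < t) (hl : 0 < l)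
    (w : Fin t → ℕ) (hw : Function.Injective w) (hwlt : ∀ i, w i < 2 ^ M)
    (p : Fin l → ℕ) (hp : ∀ k, Nat.Prime (p k)) (hpinj : Function.Injective p)
    (hprod : 2 ^ (M * t ^ 2) < ∏ k, p k) :
    ∃ k : Fin l, Function.Injective (fun i : Fin t => w i % p k) := by
  by_contra hcon
  push_neg at hcon
  set s := (Finset.univ : Finset (Fin t)).offDiag with hs
  set D : ℤ := ∏ q ∈ s, ((w q.1 : ℤ) - w q.2) with hD
  have hfac : ∀ q ∈ s, ((w q.1 : ℤ) - w q.2) ≠ 0 := by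
    intro q hq
    simp only [Finset.mem_offDiag, s] at hq
    have : w q.1 ≠ w q.2 := fun h => hq.2.2 (hw h)
    intro h
    exact this (by exact_mod_cast sub_eq_zero.mp h)
  have hDne : D ≠ 0 := Finset.prod_ne_zero_iff.mpr hfac
  -- each prime divides D
  have hdvd : ∀ k, (p k : ℤ) ∣ D := by
    intro k
    obtain ⟨i, j, hij, hne⟩ := Function.not_injective_iff.mp (hcon k)
    have h1 : (p k : ℤ) ∣ ((w i : ℤ) - w j) := by
      have h2 : ((w i % p k : ℕ) : ℤ) = ((w j % p k : ℕ) : ℤ) := by exact_mod_cast hij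
      push_cast at h2
      exact Int.ModEq.dvd h2.symm
    have hmem : ((i, j) : Fin t × Fin t) ∈ s :=
      Finset.mem_offDiag.mpr ⟨Finset.mem_univ _, Finset.mem_univ _, hne⟩
    exact dvd_trans h1 (Finset.dvd_prod_of_mem (fun q => ((w q.1 : ℤ) - w q.2)) hmem)
  have hprodvd : (∏ k, (p k : ℤ)) ∣ D := by
    apply Finset.prod_dvd_of_coprime
    · intro a _ b _ hab
      simp only [Function.onFun]
      rw [Int.isCoprime_iff_gcd_eq_one]
      exact_mod_cast (Nat.coprime_primes (hp a) (hp b)).mpr (fun h => hab (hpinj h))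
    · intro k _; exact hdvd k
  have hle : (∏ k, p k) ≤ D.natAbs := by
    apply Nat.le_of_dvd (Int.natAbs_pos.mpr hDne)
    have h2 : ((∏ k, p k : ℕ) : ℤ) ∣ D := by push_cast; exact hprodvd
    have h3 := Int.natAbs_dvd_natAbs.mpr h2
    rwa [Int.natAbs_natCast] at h3
  have hbound : D.natAbs ≤ 2 ^ (M * t ^ 2) := by
    have h1 : D.natAbs = ∏ q ∈ s, ((w q.1 : ℤ) - w q.2).natAbs := by
      rw [hD]; exact (map_prod Int.natAbsHom _ s).symm ▸ rfl
    rw [h1]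
    calc ∏ q ∈ s, ((w q.1 : ℤ) - w q.2).natAbs
        ≤ ∏ _q ∈ s, 2 ^ M := by
          apply Finset.prod_le_prod (fun _ _ => Nat.zero_le _)
          intro q _
          have h1 := hwlt q.1
          have h2 := hwlt q.2
          omega
      _ = (2 ^ M) ^ s.card := Finset.prod_const _
      _ ≤ (2 ^ M) ^ (t ^ 2) := by
          apply Nat.pow_le_pow_right (Nat.pow_pos (by norm_num))
          simp [s, Finset.offDiag_card]
          nlinarith
      _ = 2 ^ (M * t ^ 2) := by rw [← pow_mul]
  omega
end

section
/- Let G be a DAG topologically ordered on vertices u_1, ..., u_n with m edges, and let e_1, ..., e_m enumerate the edges in the lexicographic (head, tail) order. Construct a graph H on vertices v_i^j for i ∈ {1,...,n}, j ∈ {1,...,2m}, with edges: (v_i^j, v_i^{j+1}) for all i and 1 ≤ j ≤ 2m−1, and, for each k, the edge (v_{k_1}^{2k−1}, v_{k_2}^{2k}) where e_k = (u_{k_1}, u_{k_2}). Then there is a directed path from u_1 to u_n in G if and only if there is a directed path from v_1^1 to v_n^{2m} in H. -/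
def IsWalk {V : Type*} (E : V → V → Prop) (u v : V) (l : List V) : Prop :=
  l.Chain' E ∧ l.head? = some u ∧ l.getLast? = some v

def Reach {V : Type*} (E : V → V → Prop) (u v : V) : Prop :=
  ∃ l : List V, IsWalk E u v l

open Relation

lemma reach_iff_rtg {V : Type*} (E : V → V → Prop) (u v : V) :
    Reach E u v ↔ Relation.ReflTransGen E u v := by
  constructor
  · rintro ⟨l, hc, hh, hl⟩
    induction l generalizing u with
    | nil => simp at hh
    | cons a t ih =>
      simp only [List.head?_cons, Option.some.injEq] at hh
      subst hh
      cases t with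
      | nil =>
        simp only [List.getLast?_singleton, Option.some.injEq] at hl
        subst hl; exact .refl
      | cons b t' =>
        rw [List.Chain', List.isChain_cons_cons] at hc
        exact .head hc.1 (ih b hc.2 rfl (by simpa using hl))
  · intro h
    induction h using Relation.ReflTransGen.head_induction_on with
    | refl => exact ⟨[v], by simp [IsWalk, List.Chain']⟩
    | head hab _ ih =>
      obtain ⟨l, hc, hh, hl⟩ := ih
      refine ⟨_ :: l, ?_, rfl, ?_⟩
      · rw [List.Chain', List.isChain_cons]
        refine ⟨fun x hx => ?_, hc⟩
        rw [hh] at hx; cases hx; exact hab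
      · cases l with
        | nil => simp at hh
        | cons c t => simpa using hl

/-- The 3-page construction: reachability from `u 1` to `u n` in a topologically sorted
DAG `G` (vertices `1, ..., n`, edges `e 1, ..., e m` in lexicographic order) is
equivalent to reachability from `v 1 1` to `v n (2m)` in the graph `H` on vertices
`(i, j)`, `1 ≤ i ≤ n`, `1 ≤ j ≤ 2m`, with copy edges `(i,j) → (i,j+1)` and, for the
`k`-th edge `e k = (k₁, k₂)` of `G`, the simulation edge `(k₁, 2k−1) → (k₂, 2k)`. -/
theorem three_page_reduction (n m : ℕ) (hn : 1 ≤ n) (hm : 1 ≤ m)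
    (e : Fin m → ℕ × ℕ) (heinj : Function.Injective e)
    (hrange : ∀ k : Fin m, 1 ≤ (e k).1 ∧ (e k).1 < (e k).2 ∧ (e k).2 ≤ n)
    (hlex : ∀ k k' : Fin m, k < k' →
      (e k).1 < (e k').1 ∨ ((e k).1 = (e k').1 ∧ (e k).2 < (e k').2))
    (E : ℕ → ℕ → Prop) (hE : ∀ u v : ℕ, E u v ↔ ∃ k : Fin m, e k = (u, v))
    (EH : ℕ × ℕ → ℕ × ℕ → Prop)
    (hEH : ∀ a b : ℕ × ℕ, EH a b ↔
      ((a.1 = b.1 ∧ b.2 = a.2 + 1 ∧ 1 ≤ a.1 ∧ a.1 ≤ n ∧ 1 ≤ a.2 ∧ b.2 ≤ 2 * m) ∨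
       (∃ k : Fin m, a = ((e k).1, 2 * (k : ℕ) + 1) ∧ b = ((e k).2, 2 * (k : ℕ) + 2)))) :
    Reach E 1 n ↔ Reach EH (1, 1) (n, 2 * m) := by
  rw [reach_iff_rtg, reach_iff_rtg]
  have copy : ∀ i j j', 1 ≤ i → i ≤ n → 1 ≤ j → j ≤ j' → j' ≤ 2 * m →
      ReflTransGen EH (i, j) (i, j') := by
    intro i j j' hi1 hin hj1 hjj' hj'
    induction j', hjj' using Nat.le_induction with
    | base => exact .refl
    | succ j'' hj'' ih =>
      exact (ih (by omega)).tail
        ((hEH _ _).2 (Or.inl ⟨rfl, rfl, hi1, hin, by omega, by omega⟩))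
  constructor
  · intro h
    have key : ∀ u, ReflTransGen E u n → ∀ j, 1 ≤ u → u ≤ n → 1 ≤ j → j ≤ 2 * m →
        (∀ k : Fin m, u ≤ (e k).1 → j ≤ 2 * (k : ℕ) + 1) →
        ReflTransGen EH (u, j) (n, 2 * m) := by
      intro u hu
      induction hu using Relation.ReflTransGen.head_induction_on with
      | refl =>
        intro j _ _ hj1 hj2 _
        exact copy n j (2 * m) hn le_rfl hj1 hj2 le_rfl
      | @head a c hab hbn ih =>
        intro j hu1 hun hj1 hj2 hjk
        obtain ⟨k₀, hk₀⟩ := (hE _ _).1 hab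
        have h1 := hrange k₀
        have ha : (e k₀).1 = a := by rw [hk₀]
        have hc : (e k₀).2 = c := by rw [hk₀]
        have hk₀m : (k₀ : ℕ) < m := k₀.isLt
        have hjle : j ≤ 2 * (k₀ : ℕ) + 1 := hjk k₀ (le_of_eq ha.symm)
        have step1 : ReflTransGen EH (a, j) (a, 2 * (k₀ : ℕ) + 1) :=
          copy a j _ hu1 hun hj1 hjle (by omega)
        have step2 : EH (a, 2 * (k₀ : ℕ) + 1) (c, 2 * (k₀ : ℕ) + 2) :=
          (hEH _ _).2 (Or.inr ⟨k₀, by rw [ha], by rw [hc]⟩)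
        have hk₀lt : ∀ k : Fin m, c ≤ (e k).1 → (k₀ : ℕ) < (k : ℕ) := by
          intro k hk
          have hlt : (e k₀).1 < (e k).1 := by omega
          rcases lt_trichotomy k₀ k with h' | h' | h'
          · exact h'
          · subst h'; omega
          · rcases hlex k k₀ h' with h'' | ⟨h'', _⟩ <;> omega
        refine (step1.tail step2).trans (ih (2 * (k₀ : ℕ) + 2) (by omega) (by omega)
          (by omega) (by omega) ?_)
        intro k hk
        have := hk₀lt k hk
        omega
    exact key 1 h 1 le_rfl hn le_rfl (by omega) (fun k hk => by omega)
  · intro h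
    have proj : ∀ a b : ℕ × ℕ, ReflTransGen EH a b → ReflTransGen E a.1 b.1 := by
      intro a b hab
      induction hab with
      | refl => exact .refl
      | tail _ hbc ih =>
        rcases (hEH _ _).1 hbc with ⟨h1, _⟩ | ⟨k, hk1, hk2⟩
        · exact h1 ▸ ih
        · exact ih.tail (by rw [hk1, hk2]; exact (hE _ _).2 ⟨k, rfl⟩)
    exact proj _ _ h
end
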